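/- Suppose 1 ≤ k ≤ m ≤ ⌊n/2⌋. Then m(K^k_{n-m,m}, t) ≤ m(K^k_{n-1,1}, t) for all t = 0, 1, …, ⌊n/2⌋. -/
import Mathlib


/-- `matchCount G t` is the number of `t`-matchings of `G`, i.e. the number of
`t`-element sets of pairwise disjoint edges of `G`. -/
noncomputable def matchCount {V : Type*} (G : SimpleGraph V) (t : ℕ) : ℕ :=
  Nat.card {s : Finset (Sym2 V) // ↑s ⊆ G.edgeSet ∧ s.card = t ∧
    (s : Set (Sym2 V)).Pairwise fun e f => ∀ v, ¬(v ∈ e ∧ v ∈ f)}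

/-- The edge connectivity of a graph: the minimum number of edges whose
deletion disconnects the graph. -/
noncomputable def edgeConn {V : Type*} (G : SimpleGraph V) : ℕ :=
  sInf {j | ∃ F : Set (Sym2 V), F ⊆ G.edgeSet ∧ F.ncard = j ∧ ¬(G.deleteEdges F).Connected}

/-- The edge cut `∂(S)`: the set of edges of `G` with exactly one endpoint in `S`. -/
def edgeCut {V : Type*} (G : SimpleGraph V) (S : Set V) : Set (Sym2 V) :=
  {e | e ∈ G.edgeSet ∧ ∃ u ∈ S, ∃ v, v ∉ S ∧ e = s(u, v)}

/-- `Kstar n k` is the graph `K^k_{n-1,1}`: obtained from `K_1 ∪ K_{n-1}` by adding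
`k` edges joining the vertex of `K_1` (vertex `n-1`) to `k` distinct vertices of `K_{n-1}`. -/
def Kstar (n k : ℕ) : SimpleGraph (Fin n) :=
  SimpleGraph.fromRel (fun u v =>
    (u.val < n - 1 ∧ v.val < n - 1) ∨ (u.val < k ∧ v.val = n - 1))

/-- `Kmk n m k` is the graph `K^k_{n-m,m}`: obtained from `K_{n-m} ∪ K_m` by adding
`k` independent edges between the two parts. -/
def Kmk (n m k : ℕ) : SimpleGraph (Fin n) :=
  SimpleGraph.fromRel (fun u v =>
    (u.val < n - m ∧ v.val < n - m) ∨ (n - m ≤ u.val ∧ n - m ≤ v.val) ∨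
    (u.val < k ∧ v.val = n - m + u.val))

/-- The Hosoya index: the total number of matchings of `G`. -/
noncomputable def hosoya {V : Type*} [Fintype V] (G : SimpleGraph V) : ℕ :=
  ∑ t ∈ Finset.range (Fintype.card V / 2 + 1), matchCount G t

namespace Stmt15X
open Finset
attribute [local instance] Classical.propDecidable
variable {n : ℕ}

def D {V : Type*} : Sym2 V → Sym2 V → Prop := fun e f => ∀ v, ¬(v ∈ e ∧ v ∈ f)

lemma fresh {s : Finset (Sym2 (Fin n))} (hp : (↑s : Set (Sym2 (Fin n))).Pairwise D)
    {e : Sym2 (Fin n)} (he : e ∈ s) :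
    ∀ f ∈ s.erase e, ∀ x, x ∈ e → x ∉ f := fun f hf x hxe hxf =>
  hp (Finset.mem_coe.2 he) (Finset.mem_coe.2 (Finset.mem_of_mem_erase hf))
    (Finset.ne_of_mem_erase hf).symm x ⟨hxe, hxf⟩

lemma pair_insert {s : Finset (Sym2 (Fin n))} (hp : (↑s : Set (Sym2 (Fin n))).Pairwise D)
    {e : Sym2 (Fin n)} (h : ∀ f ∈ s, ∀ x, x ∈ e → x ∉ f) :
    (↑(insert e s) : Set (Sym2 (Fin n))).Pairwise D := by
  rw [Finset.coe_insert]
  exact hp.insert fun f hf _ =>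
    ⟨fun v hv => h f hf v hv.1 hv.2, fun v hv => h f hf v hv.2 hv.1⟩

lemma notMem_of_fresh {s : Finset (Sym2 (Fin n))} {e : Sym2 (Fin n)}
    (h : ∀ f ∈ s, ∀ x, x ∈ e → x ∉ f) : e ∉ s := fun he =>
  h e he e.out.1 (Sym2.out_fst_mem e) (Sym2.out_fst_mem e)

lemma pair_erase {s : Finset (Sym2 (Fin n))} (hp : (↑s : Set (Sym2 (Fin n))).Pairwise D)
    (e : Sym2 (Fin n)) : (↑(s.erase e) : Set (Sym2 (Fin n))).Pairwise D :=
  hp.mono (by simp [Finset.coe_subset])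

lemma partner_eq {s : Finset (Sym2 (Fin n))} (hp : (↑s : Set (Sym2 (Fin n))).Pairwise D)
    {a b c : Fin n} (hc : c ≠ a) (ha : s(a, c) ∈ s) (hb : s(b, c) ∈ s) : a = b := by
  by_cases h : s(a, c) = s(b, c)
  · rw [Sym2.eq_iff] at h
    rcases h with ⟨h1, -⟩ | ⟨h1, h2⟩
    · exact h1
    · exact absurd h1.symm hc
  · exact absurd ⟨Sym2.mem_mk_right a c, Sym2.mem_mk_right b c⟩
      (hp (Finset.mem_coe.2 ha) (Finset.mem_coe.2 hb) h c)

noncomputable def lov : Sym2 (Fin n) → Fin n :=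
  Sym2.lift ⟨fun a b => min a b, fun _ _ => min_comm _ _⟩
noncomputable def hiv : Sym2 (Fin n) → Fin n :=
  Sym2.lift ⟨fun a b => max a b, fun _ _ => max_comm _ _⟩

@[simp] lemma lov_mk {a b : Fin n} : lov s(a, b) = min a b := by rw [lov, Sym2.lift_mk]
@[simp] lemma hiv_mk {a b : Fin n} : hiv s(a, b) = max a b := by rw [hiv, Sym2.lift_mk]

def Bad (P K : ℕ) : Sym2 (Fin n) → Prop :=
  Sym2.lift ⟨fun a b => ((a.val < P ∧ P ≤ b.val) ∨ (b.val < P ∧ P ≤ a.val)) ∧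
      ¬((a.val < K ∧ b.val = P + a.val) ∨ (b.val < K ∧ a.val = P + b.val)),
    fun a b => propext (by tauto)⟩

@[simp] lemma bad_mk {P K : ℕ} {a b : Fin n} :
    Bad P K s(a, b) ↔ ((a.val < P ∧ P ≤ b.val) ∨ (b.val < P ∧ P ≤ a.val)) ∧
      ¬((a.val < K ∧ b.val = P + a.val) ∨ (b.val < K ∧ a.val = P + b.val)) := by
  rw [Bad, Sym2.lift_mk]

lemma kmk_mem {m k : ℕ} {a b : Fin n} : s(a, b) ∈ (Kmk n m k).edgeSet ↔ a ≠ b ∧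
    ((a.val < n - m ∧ b.val < n - m) ∨ (n - m ≤ a.val ∧ n - m ≤ b.val) ∨
     (a.val < k ∧ b.val = n - m + a.val) ∨ (b.val < k ∧ a.val = n - m + b.val)) := by
  rw [SimpleGraph.mem_edgeSet, Kmk, SimpleGraph.fromRel_adj]
  constructor
  · rintro ⟨h, h2⟩; exact ⟨h, by tauto⟩
  · rintro ⟨h, h2⟩; exact ⟨h, by tauto⟩

lemma kstar_mem {k : ℕ} {a b : Fin n} : s(a, b) ∈ (Kstar n k).edgeSet ↔ a ≠ b ∧
    ((a.val < n - 1 ∧ b.val < n - 1) ∨ (a.val < k ∧ b.val = n - 1) ∨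
     (b.val < k ∧ a.val = n - 1)) := by
  rw [SimpleGraph.mem_edgeSet, Kstar, SimpleGraph.fromRel_adj]
  constructor
  · rintro ⟨h, h2⟩; exact ⟨h, by tauto⟩
  · rintro ⟨h, h2⟩; exact ⟨h, by tauto⟩

lemma kmk_not_bad {m k : ℕ} {e : Sym2 (Fin n)} (he : e ∈ (Kmk n m k).edgeSet) :
    ¬ Bad (n - m) k e := by
  induction e with
  | _ a b =>
    rw [kmk_mem] at he
    rw [bad_mk]
    obtain ⟨-, h⟩ := he
    omega

lemma kstar_of_kmk {m k : ℕ} {lst : Fin n} (hl : lst.val = n - 1) {e : Sym2 (Fin n)}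
    (he : e ∈ (Kmk n m k).edgeSet) (hlst : lst ∉ e) : e ∈ (Kstar n k).edgeSet := by
  induction e with
  | _ a b =>
    rw [kmk_mem] at he
    rw [Sym2.mem_iff] at hlst
    push_neg at hlst
    have ha : a.val ≠ n - 1 := by
      intro h; exact hlst.1 (Fin.ext (by rw [hl, h]))
    have hb : b.val ≠ n - 1 := by
      intro h; exact hlst.2 (Fin.ext (by rw [hl, h]))
    rw [kstar_mem]
    exact ⟨he.1, Or.inl ⟨by omega, by omega⟩⟩

noncomputable def phi (k P : ℕ) (z lst : Fin n) (s : Finset (Sym2 (Fin n))) :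
    Finset (Sym2 (Fin n)) :=
  if h1 : ∃ v : Fin n, k ≤ v.val ∧ s(v, lst) ∈ s then
    if h2 : ∃ u : Fin n, u ≠ z ∧ s(z, u) ∈ s.erase s(h1.choose, lst) then
      if h2.choose.val < k ∧ h1.choose.val = P + h2.choose.val then
        insert s(h2.choose, lst) (insert s(z, h1.choose)
          ((s.erase s(h1.choose, lst)).erase s(z, h2.choose)))
      else
        insert s(z, lst) (insert s(h2.choose, h1.choose)
          ((s.erase s(h1.choose, lst)).erase s(z, h2.choose)))
    else
      if h1.choose.val = P then insert s(z, lst) (s.erase s(h1.choose, lst))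
      else insert s(z, h1.choose) (s.erase s(h1.choose, lst))
  else s

noncomputable def psi (k P : ℕ) (lst pV : Fin n) (s : Finset (Sym2 (Fin n))) :
    Finset (Sym2 (Fin n)) :=
  if hN : ∃ i : Fin n, s(i, lst) ∈ s ∧ Bad P k s(i, lst) then
    if hb : ∃ e ∈ s.erase s(hN.choose, lst), Bad P k e then
      insert s(hN.choose, lov hb.choose) (insert s(hiv hb.choose, lst)
        ((s.erase s(hN.choose, lst)).erase hb.choose))
    else if hw : ∃ w : Fin n, w ≠ pV ∧ s(pV, w) ∈ s.erase s(hN.choose, lst) then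
      insert s(hN.choose, pV) (insert s(hw.choose, lst)
        ((s.erase s(hN.choose, lst)).erase s(pV, hw.choose)))
    else insert s(pV, lst) (s.erase s(hN.choose, lst))
  else if hb : ∃ e ∈ s, Bad P k e then
    insert s(hiv hb.choose, lst) (s.erase hb.choose)
  else s

theorem main (m k t : ℕ) (hk : 1 ≤ k) (hkm : k ≤ m) (hmn : 2 * m ≤ n)
    {z lst pV : Fin n} (hz : z.val = 0) (hl : lst.val = n - 1) (hpV : pV.val = n - m)
    {s : Finset (Sym2 (Fin n))}
    (hsub : ↑s ⊆ (Kmk n m k).edgeSet) (hcard : s.card = t)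
    (hp : (↑s : Set (Sym2 (Fin n))).Pairwise D) :
    (↑(phi k (n - m) z lst s) ⊆ (Kstar n k).edgeSet ∧ (phi k (n - m) z lst s).card = t ∧
      (↑(phi k (n - m) z lst s) : Set (Sym2 (Fin n))).Pairwise D) ∧
    psi k (n - m) lst pV (phi k (n - m) z lst s) = s := by
  have hn2 : 2 ≤ n := by omega
  by_cases h1 : ∃ v : Fin n, k ≤ v.val ∧ s(v, lst) ∈ s
  · rw [phi, dif_pos h1]
    obtain ⟨hvk, hvs⟩ := h1.choose_spec
    set v := h1.choose with hvdef
    have hkmkv := kmk_mem.1 (hsub hvs)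
    have hvlst : v.val ≠ n - 1 := by
      intro h; exact hkmkv.1 (Fin.ext_iff.2 (by rw [h, hl]))
    have hvP : n - m ≤ v.val := by
      have h2' := hkmkv.2
      rw [hl] at h2'
      have := v.isLt
      omega
    have hm2 : 2 ≤ m := by have := v.isLt; omega
    have hvz : v ≠ z := by rw [Fin.ne_iff_vne]; omega
    have hvlst' : v ≠ lst := hkmkv.1
    have hzlst : z ≠ lst := by rw [Fin.ne_iff_vne]; omega
    have hfR := fresh hp hvs
    have hRv : ∀ f ∈ s.erase s(v, lst), v ∉ f := fun f hf =>
      hfR f hf v (Sym2.mem_mk_left _ _)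
    have hRl : ∀ f ∈ s.erase s(v, lst), lst ∉ f := fun f hf =>
      hfR f hf lst (Sym2.mem_mk_right _ _)
    have hpR := pair_erase hp s(v, lst)
    have hRbad : ∀ e ∈ s.erase s(v, lst), ¬ Bad (n - m) k e := fun e he =>
      kmk_not_bad (hsub (Finset.mem_of_mem_erase he))
    have hRsub : ∀ e ∈ s.erase s(v, lst), e ∈ (Kstar n k).edgeSet := fun e he =>
      kstar_of_kmk hl (hsub (Finset.mem_of_mem_erase he)) (hRl e he)
    have hseq : insert s(v, lst) (s.erase s(v, lst)) = s := Finset.insert_erase hvs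
    have hscard : s.card = (s.erase s(v, lst)).card + 1 := by
      rw [← hseq, Finset.card_insert_of_notMem (Finset.notMem_erase _ _),
        Finset.insert_erase hvs]
    by_cases h2 : ∃ u : Fin n, u ≠ z ∧ s(z, u) ∈ s.erase s(v, lst)
    · rw [dif_pos h2]
      obtain ⟨huz, hus⟩ := h2.choose_spec
      set u := h2.choose with hudef
      have husS : s(z, u) ∈ s := Finset.mem_of_mem_erase hus
      have hkmku := kmk_mem.1 (hsub husS)
      have huP : u.val ≤ n - m := by
        have h2' := hkmku.2
        rw [hz] at h2'
        omega
      have hu0 : u.val ≠ 0 := by rw [Fin.ne_iff_vne, hz] at huz; exact huz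
      have hulst : u ≠ lst := fun h => hRl _ hus (h ▸ Sym2.mem_mk_right _ _)
      have hulst' : u.val ≠ n - 1 := by rwa [Fin.ne_iff_vne, hl] at hulst
      have huv : u ≠ v := fun h => hRv _ hus (h ▸ Sym2.mem_mk_right _ _)
      have hfzu := fresh hpR hus
      have hR2z : ∀ f ∈ (s.erase s(v, lst)).erase s(z, u), z ∉ f := fun f hf =>
        hfzu f hf z (Sym2.mem_mk_left _ _)
      have hR2u : ∀ f ∈ (s.erase s(v, lst)).erase s(z, u), u ∉ f := fun f hf =>
        hfzu f hf u (Sym2.mem_mk_right _ _)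
      have hR2v : ∀ f ∈ (s.erase s(v, lst)).erase s(z, u), v ∉ f := fun f hf =>
        hRv f (Finset.mem_of_mem_erase hf)
      have hR2l : ∀ f ∈ (s.erase s(v, lst)).erase s(z, u), lst ∉ f := fun f hf =>
        hRl f (Finset.mem_of_mem_erase hf)
      have hpR2 := pair_erase hpR s(z, u)
      have hR2bad : ∀ e ∈ (s.erase s(v, lst)).erase s(z, u), ¬ Bad (n - m) k e :=
        fun e he => hRbad e (Finset.mem_of_mem_erase he)
      have hR2sub : ∀ e ∈ (s.erase s(v, lst)).erase s(z, u), e ∈ (Kstar n k).edgeSet :=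
        fun e he => hRsub e (Finset.mem_of_mem_erase he)
      have hReq : insert s(z, u) ((s.erase s(v, lst)).erase s(z, u)) = s.erase s(v, lst) :=
        Finset.insert_erase hus
      have hRcard : (s.erase s(v, lst)).card = ((s.erase s(v, lst)).erase s(z, u)).card + 1 := by
        rw [← hReq, Finset.card_insert_of_notMem (Finset.notMem_erase _ _),
          Finset.insert_erase hus]
      by_cases h3 : u.val < k ∧ v.val = n - m + u.val
      · rw [if_pos h3]
        -- N = insert s(u,lst) (insert s(z,v) R2)
        have fr1 : ∀ f ∈ (s.erase s(v, lst)).erase s(z, u), ∀ x, x ∈ s(z, v) → x ∉ f := by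
          intro f hf x hx
          rw [Sym2.mem_iff] at hx
          rcases hx with rfl | rfl
          exacts [hR2z f hf, hR2v f hf]
        have hnm1 : s(z, v) ∉ (s.erase s(v, lst)).erase s(z, u) := notMem_of_fresh fr1
        have fr2 : ∀ f ∈ insert s(z, v) ((s.erase s(v, lst)).erase s(z, u)),
            ∀ x, x ∈ s(u, lst) → x ∉ f := by
          intro f hf x hx
          rw [Sym2.mem_iff] at hx
          rcases Finset.mem_insert.1 hf with rfl | hf
          · rw [Sym2.mem_iff]
            rcases hx with rfl | rfl
            · push_neg; exact ⟨huz, huv⟩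
            · push_neg; exact ⟨hzlst.symm, hvlst'.symm⟩
          · rcases hx with rfl | rfl
            exacts [hR2u f hf, hR2l f hf]
        have hnm2 : s(u, lst) ∉ insert s(z, v) ((s.erase s(v, lst)).erase s(z, u)) :=
          notMem_of_fresh fr2
        have hpN : (↑(insert s(u, lst) (insert s(z, v) ((s.erase s(v, lst)).erase s(z, u)))) :
            Set (Sym2 (Fin n))).Pairwise D :=
          pair_insert (pair_insert hpR2 fr1) fr2
        refine ⟨⟨?_, ?_, hpN⟩, ?_⟩
        · intro e he
          rw [Finset.mem_coe, Finset.mem_insert, Finset.mem_insert] at he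
          rcases he with rfl | rfl | he
          · rw [kstar_mem]; exact ⟨hulst, Or.inr (Or.inl ⟨h3.1, hl⟩)⟩
          · rw [kstar_mem]
            refine ⟨hvz.symm, Or.inl ⟨by omega, by omega⟩⟩
          · exact hR2sub e he
        · rw [Finset.card_insert_of_notMem hnm2, Finset.card_insert_of_notMem hnm1]
          omega
        · -- decoding
          have hbadul : Bad (n - m) k s(u, lst) := by rw [bad_mk]; omega
          have hN' : ∃ i : Fin n, s(i, lst) ∈ insert s(u, lst) (insert s(z, v)
              ((s.erase s(v, lst)).erase s(z, u))) ∧ Bad (n - m) k s(i, lst) :=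
            ⟨u, Finset.mem_insert_self _ _, hbadul⟩
          rw [psi, dif_pos hN']
          have hch : hN'.choose = u := by
            obtain ⟨hi1, hi2⟩ := hN'.choose_spec
            rcases Finset.mem_insert.1 hi1 with h | h
            · rw [Sym2.eq_iff] at h
              rcases h with ⟨h, -⟩ | ⟨-, h⟩
              · exact h
              · exact absurd h.symm hulst
            · rcases Finset.mem_insert.1 h with h | h
              · rw [Sym2.eq_iff] at h
                rcases h with ⟨-, h⟩ | ⟨-, h⟩
                · exact absurd h.symm hvlst'
                · exact absurd h.symm hzlst
              · exact absurd (Sym2.mem_mk_right _ _) (hR2l _ h)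
          rw [hch, Finset.erase_insert hnm2]
          have hb : ∃ e ∈ insert s(z, v) ((s.erase s(v, lst)).erase s(z, u)),
              Bad (n - m) k e :=
            ⟨s(z, v), Finset.mem_insert_self _ _, by rw [bad_mk]; omega⟩
          rw [dif_pos hb]
          have hech : hb.choose = s(z, v) := by
            obtain ⟨he1, he2⟩ := hb.choose_spec
            rcases Finset.mem_insert.1 he1 with h | h
            exacts [h, absurd he2 (hR2bad _ h)]
          rw [hech, Finset.erase_insert hnm1]
          have hlov : lov s(z, v) = z := by
            rw [lov_mk]; exact min_eq_left (by rw [Fin.le_def]; omega)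
          have hhiv : hiv s(z, v) = v := by
            rw [hiv_mk]; exact max_eq_right (by rw [Fin.le_def]; omega)
          rw [hlov, hhiv, show s(u, z) = s(z, u) from Sym2.eq_swap,
            Finset.insert_comm, hReq, hseq]
      · rw [if_neg h3]
        -- N = insert s(z,lst) (insert s(u,v) R2)
        have fr1 : ∀ f ∈ (s.erase s(v, lst)).erase s(z, u), ∀ x, x ∈ s(u, v) → x ∉ f := by
          intro f hf x hx
          rw [Sym2.mem_iff] at hx
          rcases hx with rfl | rfl
          exacts [hR2u f hf, hR2v f hf]
        have hnm1 : s(u, v) ∉ (s.erase s(v, lst)).erase s(z, u) := notMem_of_fresh fr1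
        have fr2 : ∀ f ∈ insert s(u, v) ((s.erase s(v, lst)).erase s(z, u)),
            ∀ x, x ∈ s(z, lst) → x ∉ f := by
          intro f hf x hx
          rw [Sym2.mem_iff] at hx
          rcases Finset.mem_insert.1 hf with rfl | hf
          · rw [Sym2.mem_iff]
            rcases hx with rfl | rfl
            · push_neg; exact ⟨fun h => huz h.symm, fun h => hvz h.symm⟩
            · push_neg; exact ⟨fun h => hulst h.symm, fun h => hvlst' h.symm⟩
          · rcases hx with rfl | rfl
            exacts [hR2z f hf, hR2l f hf]
        have hnm2 : s(z, lst) ∉ insert s(u, v) ((s.erase s(v, lst)).erase s(z, u)) :=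
          notMem_of_fresh fr2
        have hpN : (↑(insert s(z, lst) (insert s(u, v) ((s.erase s(v, lst)).erase s(z, u)))) :
            Set (Sym2 (Fin n))).Pairwise D :=
          pair_insert (pair_insert hpR2 fr1) fr2
        refine ⟨⟨?_, ?_, hpN⟩, ?_⟩
        · intro e he
          rw [Finset.mem_coe, Finset.mem_insert, Finset.mem_insert] at he
          rcases he with rfl | rfl | he
          · rw [kstar_mem]; exact ⟨hzlst, Or.inr (Or.inl ⟨by omega, hl⟩)⟩
          · rw [kstar_mem]
            refine ⟨huv, Or.inl ⟨by omega, by omega⟩⟩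
          · exact hR2sub e he
        · rw [Finset.card_insert_of_notMem hnm2, Finset.card_insert_of_notMem hnm1]
          omega
        · have hbadzl : Bad (n - m) k s(z, lst) := by rw [bad_mk]; omega
          have hN' : ∃ i : Fin n, s(i, lst) ∈ insert s(z, lst) (insert s(u, v)
              ((s.erase s(v, lst)).erase s(z, u))) ∧ Bad (n - m) k s(i, lst) :=
            ⟨z, Finset.mem_insert_self _ _, hbadzl⟩
          rw [psi, dif_pos hN']
          have hch : hN'.choose = z := by
            obtain ⟨hi1, hi2⟩ := hN'.choose_spec
            rcases Finset.mem_insert.1 hi1 with h | h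
            · rw [Sym2.eq_iff] at h
              rcases h with ⟨h, -⟩ | ⟨-, h⟩
              · exact h
              · exact absurd h.symm hzlst
            · rcases Finset.mem_insert.1 h with h | h
              · rw [Sym2.eq_iff] at h
                rcases h with ⟨-, h⟩ | ⟨-, h⟩
                · exact absurd h.symm hvlst'
                · exact absurd h.symm hulst
              · exact absurd (Sym2.mem_mk_right _ _) (hR2l _ h)
          rw [hch, Finset.erase_insert hnm2]
          by_cases h4 : u.val < n - m
          · have hb : ∃ e ∈ insert s(u, v) ((s.erase s(v, lst)).erase s(z, u)),
                Bad (n - m) k e :=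
              ⟨s(u, v), Finset.mem_insert_self _ _, by rw [bad_mk]; omega⟩
            rw [dif_pos hb]
            have hech : hb.choose = s(u, v) := by
              obtain ⟨he1, he2⟩ := hb.choose_spec
              rcases Finset.mem_insert.1 he1 with h | h
              exacts [h, absurd he2 (hR2bad _ h)]
            rw [hech, Finset.erase_insert hnm1]
            have hlov : lov s(u, v) = u := by
              rw [lov_mk]; exact min_eq_left (by rw [Fin.le_def]; omega)
            have hhiv : hiv s(u, v) = v := by
              rw [hiv_mk]; exact max_eq_right (by rw [Fin.le_def]; omega)
            rw [hlov, hhiv, Finset.insert_comm, hReq, hseq]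
          · have hu : u.val = n - m := by omega
            have hbneg : ¬ ∃ e ∈ insert s(u, v) ((s.erase s(v, lst)).erase s(z, u)),
                Bad (n - m) k e := by
              rintro ⟨e, he, hbe⟩
              rcases Finset.mem_insert.1 he with rfl | he
              · rw [bad_mk] at hbe; omega
              · exact hR2bad e he hbe
            rw [dif_neg hbneg]
            have hpVu : pV = u := by rw [Fin.ext_iff]; omega
            have hw : ∃ w : Fin n, w ≠ pV ∧ s(pV, w) ∈ insert s(u, v)
                ((s.erase s(v, lst)).erase s(z, u)) :=
              ⟨v, by rw [hpVu]; exact fun h => huv h.symm,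
                by rw [hpVu]; exact Finset.mem_insert_self _ _⟩
            rw [dif_pos hw]
            have hwch : hw.choose = v := by
              obtain ⟨hw1, hw2⟩ := hw.choose_spec
              rcases Finset.mem_insert.1 hw2 with h | h
              · rw [Sym2.eq_iff] at h
                rcases h with ⟨-, h⟩ | ⟨h1, -⟩
                · exact h
                · exact absurd (hpVu.symm.trans h1) huv
              · exact (hR2u _ h (Sym2.mem_iff.2 (Or.inl hpVu.symm))).elim
            rw [hwch, hpVu, Finset.erase_insert hnm1, Finset.insert_comm, hReq, hseq]
    · rw [dif_neg h2]
      have hzR : ∀ f ∈ s.erase s(v, lst), z ∉ f := by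
        intro f hf hzf
        obtain ⟨w, rfl⟩ := Sym2.mem_iff_exists.1 hzf
        have hwz : w ≠ z := by
          rintro rfl
          exact (Kmk n m k).not_isDiag_of_mem_edgeSet
            (hsub (Finset.mem_of_mem_erase hf)) (by rw [Sym2.mk_isDiag_iff])
        exact h2 ⟨w, hwz, hf⟩
      by_cases h5 : v.val = n - m
      · rw [if_pos h5]
        have fr1 : ∀ f ∈ s.erase s(v, lst), ∀ x, x ∈ s(z, lst) → x ∉ f := by
          intro f hf x hx
          rw [Sym2.mem_iff] at hx
          rcases hx with rfl | rfl
          exacts [hzR f hf, hRl f hf]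
        have hnm1 : s(z, lst) ∉ s.erase s(v, lst) := notMem_of_fresh fr1
        refine ⟨⟨?_, ?_, pair_insert hpR fr1⟩, ?_⟩
        · intro e he
          rw [Finset.mem_coe, Finset.mem_insert] at he
          rcases he with rfl | he
          · rw [kstar_mem]; exact ⟨hzlst, Or.inr (Or.inl ⟨by omega, hl⟩)⟩
          · exact hRsub e he
        · rw [Finset.card_insert_of_notMem hnm1]; omega
        · have hbadzl : Bad (n - m) k s(z, lst) := by rw [bad_mk]; omega
          have hN' : ∃ i : Fin n, s(i, lst) ∈ insert s(z, lst) (s.erase s(v, lst)) ∧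
              Bad (n - m) k s(i, lst) := ⟨z, Finset.mem_insert_self _ _, hbadzl⟩
          rw [psi, dif_pos hN']
          have hch : hN'.choose = z := by
            obtain ⟨hi1, hi2⟩ := hN'.choose_spec
            rcases Finset.mem_insert.1 hi1 with h | h
            · rw [Sym2.eq_iff] at h
              rcases h with ⟨h, -⟩ | ⟨-, h⟩
              · exact h
              · exact absurd h.symm hzlst
            · exact absurd (Sym2.mem_mk_right _ _) (hRl _ h)
          rw [hch, Finset.erase_insert hnm1]
          have hbneg : ¬ ∃ e ∈ s.erase s(v, lst), Bad (n - m) k e := by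
            rintro ⟨e, he, hbe⟩; exact hRbad e he hbe
          rw [dif_neg hbneg]
          have hpVv : pV = v := by rw [Fin.ext_iff]; omega
          have hwneg : ¬ ∃ w : Fin n, w ≠ pV ∧ s(pV, w) ∈ s.erase s(v, lst) := by
            rintro ⟨w, hw1, hw2⟩
            rw [hpVv] at hw2
            exact hRv _ hw2 (Sym2.mem_mk_left _ _)
          rw [dif_neg hwneg, hpVv, hseq]
      · rw [if_neg h5]
        have fr1 : ∀ f ∈ s.erase s(v, lst), ∀ x, x ∈ s(z, v) → x ∉ f := by
          intro f hf x hx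
          rw [Sym2.mem_iff] at hx
          rcases hx with rfl | rfl
          exacts [hzR f hf, hRv f hf]
        have hnm1 : s(z, v) ∉ s.erase s(v, lst) := notMem_of_fresh fr1
        refine ⟨⟨?_, ?_, pair_insert hpR fr1⟩, ?_⟩
        · intro e he
          rw [Finset.mem_coe, Finset.mem_insert] at he
          rcases he with rfl | he
          · rw [kstar_mem]
            refine ⟨hvz.symm, Or.inl ⟨by omega, by omega⟩⟩
          · exact hRsub e he
        · rw [Finset.card_insert_of_notMem hnm1]; omega
        · have hNneg : ¬ ∃ i : Fin n, s(i, lst) ∈ insert s(z, v) (s.erase s(v, lst)) ∧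
              Bad (n - m) k s(i, lst) := by
            rintro ⟨i, hi, -⟩
            rcases Finset.mem_insert.1 hi with h | h
            · rw [Sym2.eq_iff] at h
              rcases h with ⟨-, h⟩ | ⟨-, h⟩
              · exact hvlst (by rw [← h]; exact hl)
              · exact hzlst h.symm
            · exact hRl _ h (Sym2.mem_mk_right _ _)
          rw [psi, dif_neg hNneg]
          have hb : ∃ e ∈ insert s(z, v) (s.erase s(v, lst)), Bad (n - m) k e :=
            ⟨s(z, v), Finset.mem_insert_self _ _, by rw [bad_mk]; omega⟩
          rw [dif_pos hb]
          have hech : hb.choose = s(z, v) := by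
            obtain ⟨he1, he2⟩ := hb.choose_spec
            rcases Finset.mem_insert.1 he1 with h | h
            exacts [h, absurd he2 (hRbad _ h)]
          rw [hech, Finset.erase_insert hnm1]
          have hhiv : hiv s(z, v) = v := by
            rw [hiv_mk]; exact max_eq_right (by rw [Fin.le_def]; omega)
          rw [hhiv, hseq]
  · rw [phi, dif_neg h1]
    have hNneg : ¬ ∃ i : Fin n, s(i, lst) ∈ s ∧ Bad (n - m) k s(i, lst) := by
      rintro ⟨i, hi, hbi⟩
      exact kmk_not_bad (hsub hi) hbi
    have hbneg : ¬ ∃ e ∈ s, Bad (n - m) k e := by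
      rintro ⟨e, he, hbe⟩
      exact kmk_not_bad (hsub he) hbe
    refine ⟨⟨?_, hcard, hp⟩, by rw [psi, dif_neg hNneg, dif_neg hbneg]⟩
    intro e he
    rw [Finset.mem_coe] at he
    by_cases hlste : lst ∈ e
    · obtain ⟨w, rfl⟩ := Sym2.mem_iff_exists.1 hlste
      have hkm' := kmk_mem.1 (hsub he)
      have hwk : w.val < k := by
        by_contra hwk
        exact h1 ⟨w, by omega, by rwa [Sym2.eq_swap] at he⟩
      rw [kstar_mem]
      exact ⟨hkm'.1, Or.inr (Or.inr ⟨hwk, hl⟩)⟩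
    · exact kstar_of_kmk hl (hsub he) hlste

end Stmt15X

/-- For `1 ≤ k ≤ m ≤ ⌊n/2⌋`: `m(K^k_{n-m,m},t) ≤ m(K^k_{n-1,1},t)` for all `t ≤ ⌊n/2⌋`. -/
theorem stmt15 (n m k : ℕ) (hk : 1 ≤ k) (hkm : k ≤ m) (hm2 : m ≤ n / 2) :
    ∀ t : ℕ, t ≤ n / 2 → matchCount (Kmk n m k) t ≤ matchCount (Kstar n k) t := by
  intro t _
  have hmn : 2 * m ≤ n := by omega
  have hn2 : 2 ≤ n := by omega
  obtain ⟨z, hz⟩ : ∃ z : Fin n, z.val = 0 := ⟨⟨0, by omega⟩, rfl⟩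
  obtain ⟨lst, hl⟩ : ∃ lst : Fin n, lst.val = n - 1 := ⟨⟨n - 1, by omega⟩, rfl⟩
  obtain ⟨pV, hpV⟩ : ∃ pV : Fin n, pV.val = n - m := ⟨⟨n - m, by omega⟩, rfl⟩
  rw [matchCount, matchCount]
  refine Nat.card_le_card_of_injective
    (fun M => ⟨Stmt15X.phi k (n - m) z lst M.1,
      (Stmt15X.main m k t hk hkm hmn hz hl hpV M.2.1 M.2.2.1 M.2.2.2).1⟩) ?_
  intro M M' h
  apply Subtype.ext
  have h' : Stmt15X.phi k (n - m) z lst M.1 = Stmt15X.phi k (n - m) z lst M'.1 :=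
    congrArg Subtype.val h
  have h2 := congrArg (Stmt15X.psi k (n - m) lst pV) h'
  rwa [(Stmt15X.main m k t hk hkm hmn hz hl hpV M.2.1 M.2.2.1 M.2.2.2).2,
    (Stmt15X.main m k t hk hkm hmn hz hl hpV M'.2.1 M'.2.2.1 M'.2.2.2).2] at h2
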